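/- Let (Ω, F, P) be a probability space, let 𝕐 be a standard Borel space, let K ≥ 2, and let Y : Ω → 𝕐^K be measurable. Let ν₁, …, ν_K be probability measures on 𝕐 such that the law of Y and the product measure ν₁ ⊗ ⋯ ⊗ ν_K are mutually absolutely continuous. Let J : Ω → {1,…,K} be measurable, independent of Y, with 0 < P(J = i) < 1 for every i, and define the thinned observation Z : Ω → 𝕐^{K−1} as the vector Y with its J-th coordinate deleted (i.e. Z(ω)_i = Y(ω)_{σ_{J(ω)}(i)} where σ_j : {1,…,K−1} → {1,…,K} is the increasing enumeration of {1,…,K} \ {j}). If f : 𝕐^K → ℝ is measurable, f(Y) is integrable, and f(Y) is P-almost surely equal to its conditional expectation E[f(Y) | σ(Z)] given the σ-algebra generated by Z, then f(Y) is P-almost surely constant. -/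

import Mathlib

open MeasureTheory ProbabilityTheory Filter Set

/-- Doob–Dynkin factorization for real-valued functions. -/
lemma exists_eq_comp_of_stronglyMeasurable_comap {Ω β : Type*} [MeasurableSpace β]
    (Z : Ω → β) (g : Ω → ℝ)
    (hg : StronglyMeasurable[MeasurableSpace.comap Z inferInstance] g) :
    ∃ h : β → ℝ, Measurable h ∧ ∀ ω, g ω = h (Z ω) := by
  classical
  letI m : MeasurableSpace Ω := MeasurableSpace.comap Z inferInstance
  have hsimple : ∀ s : @SimpleFunc Ω m ℝ,
      ∃ t : β → ℝ, Measurable t ∧ ∀ ω, s ω = t (Z ω) := by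
    intro s
    refine @SimpleFunc.induction Ω ℝ m _
      (fun s => ∃ t : β → ℝ, Measurable t ∧ ∀ ω, s ω = t (Z ω)) ?_ ?_ s
    · intro c s hs
      obtain ⟨T, hT, hTs⟩ := id hs
      refine ⟨T.indicator fun _ => c, measurable_const.indicator hT, fun ω => ?_⟩
      simp only [SimpleFunc.piecewise_apply, SimpleFunc.coe_const, Function.const_apply,
        SimpleFunc.coe_zero, Pi.zero_apply, Set.indicator]
      have : ω ∈ s ↔ Z ω ∈ T := by rw [← hTs]; rfl
      by_cases hω : ω ∈ s
      · rw [if_pos hω, if_pos (this.1 hω)]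
      · rw [if_neg hω, if_neg (fun h => hω (this.2 h))]
    · rintro s₁ s₂ - ⟨t₁, ht₁, h₁⟩ ⟨t₂, ht₂, h₂⟩
      exact ⟨t₁ + t₂, ht₁.add ht₂, fun ω => by
        simp [SimpleFunc.coe_add, h₁ ω, h₂ ω]⟩
  choose t ht hts using fun k => hsimple (hg.approx k)
  set S : Set β := {b | ∃ c, Tendsto (fun k => t k b) atTop (nhds c)} with hS
  have hSmeas : MeasurableSet S := measurableSet_exists_tendsto ht
  set h : β → ℝ := fun b =>
    if hb : ∃ c, Tendsto (fun k => t k b) atTop (nhds c) then hb.choose else 0 with hh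
  have htend : ∀ b, Tendsto (fun k => S.indicator (t k) b) atTop (nhds (h b)) := by
    intro b
    by_cases hb : b ∈ S
    · have heq : (fun k => S.indicator (t k) b) = fun k => t k b :=
        funext fun k => Set.indicator_of_mem hb _
      rw [heq, show h b = hb.choose from dif_pos hb]
      exact hb.choose_spec
    · have heq : (fun k => S.indicator (t k) b) = fun _ => (0 : ℝ) :=
        funext fun k => Set.indicator_of_notMem hb _
      rw [heq, show h b = 0 from dif_neg hb]
      exact tendsto_const_nhds
  have hmeas : Measurable h := by
    refine measurable_of_tendsto_metrizable (fun k => (ht k).indicator hSmeas) ?_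
    rw [tendsto_pi_nhds]; exact htend
  refine ⟨h, hmeas, fun ω => ?_⟩
  have h1 : Tendsto (fun k => t k (Z ω)) atTop (nhds (g ω)) := by
    have := hg.tendsto_approx ω
    simpa [fun k => hts k ω] using this
  have hZ : Z ω ∈ S := ⟨g ω, h1⟩
  have h2 : Tendsto (fun k => S.indicator (t k) (Z ω)) atTop (nhds (g ω)) := by
    have : ∀ k, S.indicator (t k) (Z ω) = t k (Z ω) := fun k => Set.indicator_of_mem hZ _
    simpa [this]
  exact tendsto_nhds_unique h2 (htend (Z ω))

section splice
variable {𝕐 : Type*} [MeasurableSpace 𝕐] {n : ℕ}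

/-- The splicing map: take the first `m` coordinates from the second component and the rest
from the first. -/
noncomputable def splice (m : ℕ) (p : (Fin (n + 1) → 𝕐) × (Fin (n + 1) → 𝕐)) :
    Fin (n + 1) → 𝕐 :=
  fun i => if (i : ℕ) < m then p.2 i else p.1 i

lemma measurable_splice (m : ℕ) : Measurable (splice (𝕐 := 𝕐) (n := n) m) := by
  refine measurable_pi_lambda _ fun i => ?_
  unfold splice
  by_cases him : (i : ℕ) < m
  · simp only [him, if_true]
    exact (measurable_pi_apply i).comp measurable_snd
  · simp only [him, if_false]
    exact (measurable_pi_apply i).comp measurable_fst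

lemma map_splice (ν : Fin (n + 1) → Measure 𝕐) [∀ i, IsProbabilityMeasure (ν i)] (m : ℕ) :
    Measure.map (splice m) ((Measure.pi ν).prod (Measure.pi ν)) = Measure.pi ν := by
  classical
  refine (Measure.pi_eq fun s hs => ?_).symm
  rw [Measure.map_apply (measurable_splice m) (MeasurableSet.univ_pi hs)]
  have hpre : splice (𝕐 := 𝕐) (n := n) m ⁻¹' (Set.pi univ s)
      = (Set.pi univ fun i : Fin (n + 1) => if (i : ℕ) < m then univ else s i)
        ×ˢ (Set.pi univ fun i : Fin (n + 1) => if (i : ℕ) < m then s i else univ) := by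
    ext p
    simp only [Set.mem_preimage, Set.mem_pi, Set.mem_univ, true_implies, Set.mem_prod, splice]
    constructor
    · intro hp
      refine ⟨fun i => ?_, fun i => ?_⟩ <;> by_cases him : (i : ℕ) < m <;>
          simp only [him, if_true, if_false, Set.mem_univ] <;>
        simpa [him] using hp i
    · rintro ⟨h1, h2⟩ i
      by_cases him : (i : ℕ) < m
      · simpa [him] using h2 i
      · simpa [him] using h1 i
  rw [hpre, Measure.prod_prod, Measure.pi_pi, Measure.pi_pi, ← Finset.prod_mul_distrib]
  refine Finset.prod_congr rfl fun i _ => ?_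
  by_cases him : (i : ℕ) < m <;> simp [him]

end splice

open MeasureTheory ProbabilityTheory

/-- Multiple-deletion lemma: let `Y : Ω → 𝕐^K` (`K = n + 1 ≥ 2`) have a law mutually
absolutely continuous with a product of probability measures, and let `J` be an
independent random index with `0 < P(J = i) < 1` for all `i`.  Let `Z` be `Y` with its
`J`-th coordinate deleted.  Then any integrable `f (Y)` equal a.s. to its conditional
expectation given `σ(Z)` is a.s. constant. -/
theorem const_of_condexp_multipleDeletion
    {Ω 𝕐 : Type*} [F : MeasurableSpace Ω] [MeasurableSpace 𝕐] [StandardBorelSpace 𝕐]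
    (P : Measure Ω) [IsProbabilityMeasure P]
    (n : ℕ) (hn : 1 ≤ n)
    (Y : Ω → Fin (n + 1) → 𝕐) (hY : Measurable Y)
    (ν : Fin (n + 1) → Measure 𝕐) (hν : ∀ i, IsProbabilityMeasure (ν i))
    (hac₁ : Measure.map Y P ≪ Measure.pi ν)
    (hac₂ : Measure.pi ν ≪ Measure.map Y P)
    (J : Ω → Fin (n + 1)) (hJ : Measurable J)
    (hindep : IndepFun J Y P)
    (hJpos : ∀ i, 0 < P {ω | J ω = i}) (hJlt : ∀ i, P {ω | J ω = i} < 1)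
    (f : (Fin (n + 1) → 𝕐) → ℝ) (hf : Measurable f)
    (hint : Integrable (fun ω => f (Y ω)) P)
    (hfix : (fun ω => f (Y ω)) =ᵐ[P]
      P[(fun ω => f (Y ω)) |
        MeasurableSpace.comap (fun ω (i : Fin n) => Y ω ((J ω).succAbove i)) inferInstance]) :
    ∃ c : ℝ, (fun ω => f (Y ω)) =ᵐ[P] fun _ => c := by
  classical
  haveI := hν
  set μ : Measure (Fin (n + 1) → 𝕐) := Measure.pi ν with hμdef
  set Z : Ω → (Fin n → 𝕐) := fun ω (i : Fin n) => Y ω ((J ω).succAbove i) with hZdef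
  have hZ : Measurable Z := by
    refine measurable_pi_lambda _ fun i => ?_
    have hmeas : Measurable fun p : (Fin (n + 1) → 𝕐) × Fin (n + 1) =>
        p.1 (p.2.succAbove i) :=
      measurable_from_prod_countable_left fun j => measurable_pi_apply (j.succAbove i)
    exact hmeas.comp (hY.prodMk hJ)
  -- Doob–Dynkin: the conditional expectation factors through `Z`.
  obtain ⟨h, hh, hgh⟩ := exists_eq_comp_of_stronglyMeasurable_comap Z
    (P[(fun ω => f (Y ω)) | MeasurableSpace.comap Z inferInstance])
    stronglyMeasurable_condExp
  have hfZ : ∀ᵐ ω ∂P, f (Y ω) = h (Z ω) := by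
    filter_upwards [hfix] with ω hω
    rw [hω, hgh ω]
  -- For each `j`, `f` does not depend on coordinate `j`, `μ`-a.e.
  set A : Fin (n + 1) → Set (Fin (n + 1) → 𝕐) :=
    fun j => {y | f y ≠ h fun i => y (j.succAbove i)} with hAdef
  have hAmeas : ∀ j, MeasurableSet (A j) := by
    intro j
    have h1 : Measurable fun y : Fin (n + 1) → 𝕐 => h fun i => y (j.succAbove i) :=
      hh.comp (measurable_pi_lambda _ fun i => measurable_pi_apply _)
    exact (measurableSet_eq_fun hf h1).compl
  have hAnull : ∀ j, μ (A j) = 0 := by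
    intro j
    have hsub : J ⁻¹' {j} ∩ Y ⁻¹' A j ⊆ {ω | ¬ f (Y ω) = h (Z ω)} := by
      rintro ω ⟨h1, h2⟩
      have hJω : J ω = j := h1
      have : f (Y ω) ≠ h fun i => Y ω (j.succAbove i) := h2
      simpa [hZdef, hJω] using this
    have h0 : P (J ⁻¹' {j} ∩ Y ⁻¹' A j) = 0 :=
      measure_mono_null hsub (ae_iff.mp hfZ)
    have hmul := hindep.measure_inter_preimage_eq_mul {j} (A j)
      (measurableSet_singleton j) (hAmeas j)
    rw [h0] at hmul
    have hJj : P (J ⁻¹' {j}) ≠ 0 := by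
      have := hJpos j
      simp only [Set.preimage, Set.mem_singleton_iff]
      exact fun hc => absurd (hc ▸ this) (lt_irrefl 0)
    have hY0 : P (Y ⁻¹' A j) = 0 := by
      rcases mul_eq_zero.mp hmul.symm with hc | hc
      · exact absurd hc hJj
      · exact hc
    have hmap0 : Measure.map Y P (A j) = 0 := by
      rw [Measure.map_apply hY (hAmeas j)]; exact hY0
    exact hac₂ hmap0
  -- Splicing argument: `f p.1 = f p.2` for `μ ⊗ μ` a.e. `p`.
  have hκnull : ∀ (m : ℕ) (j : Fin (n + 1)), (μ.prod μ) (splice m ⁻¹' A j) = 0 := by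
    intro m j
    rw [← Measure.map_apply (measurable_splice m) (hAmeas j), map_splice ν m]
    exact hAnull j
  have hstep : ∀ m : ℕ, m < n + 1 →
      ∀ᵐ p ∂(μ.prod μ), f (splice m p) = f (splice (m + 1) p) := by
    intro m hm
    set j : Fin (n + 1) := ⟨m, hm⟩ with hjdef
    have h1 := measure_eq_zero_iff_ae_notMem.mp (hκnull m j)
    have h2 := measure_eq_zero_iff_ae_notMem.mp (hκnull (m + 1) j)
    filter_upwards [h1, h2] with p hp1 hp2
    have e1 : f (splice m p) = h fun i => splice m p (j.succAbove i) := not_not.mp hp1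
    have e2 : f (splice (m + 1) p) = h fun i => splice (m + 1) p (j.succAbove i) :=
      not_not.mp hp2
    have hcoord : (fun i => splice m p (j.succAbove i))
        = fun i => splice (m + 1) p (j.succAbove i) := by
      funext i
      have hne : j.succAbove i ≠ j := Fin.succAbove_ne j i
      have hvalne : ((j.succAbove i : Fin (n + 1)) : ℕ) ≠ m := by
        intro hc
        exact hne (Fin.ext (by rw [hc, hjdef]))
      show (if ((j.succAbove i : Fin (n + 1)) : ℕ) < m then p.2 _ else p.1 _)
        = if ((j.succAbove i : Fin (n + 1)) : ℕ) < m + 1 then p.2 _ else p.1 _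
      by_cases hlt : ((j.succAbove i : Fin (n + 1)) : ℕ) < m
      · rw [if_pos hlt, if_pos (Nat.lt_succ_of_lt hlt)]
      · rw [if_neg hlt, if_neg (by omega)]
    rw [e1, e2, hcoord]
  have hchain : ∀ m : ℕ, m ≤ n + 1 → ∀ᵐ p ∂(μ.prod μ), f p.1 = f (splice m p) := by
    intro m
    induction m with
    | zero =>
      intro _
      refine Filter.Eventually.of_forall fun p => ?_
      have : splice (𝕐 := 𝕐) (n := n) 0 p = p.1 := by
        funext i; simp [splice]
      rw [this]
    | succ m ih =>
      intro hm
      filter_upwards [ih (by omega), hstep m (by omega)] with p hp1 hp2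
      rw [hp1, hp2]
  have hfinal : ∀ᵐ p ∂(μ.prod μ), f p.1 = f p.2 := by
    filter_upwards [hchain (n + 1) le_rfl] with p hp
    have : splice (𝕐 := 𝕐) (n := n) (n + 1) p = p.2 := by
      funext i; simp [splice, i.isLt]
    rwa [this] at hp
  -- Conclude via Fubini that `f` is `μ`-a.e. constant.
  have hae : ∀ᵐ y ∂μ, ∀ᵐ y' ∂μ, f y = f y' := Measure.ae_ae_of_ae_prod hfinal
  haveI : (ae μ).NeBot := ae_neBot.mpr (IsProbabilityMeasure.ne_zero μ)
  obtain ⟨y₀, hy₀⟩ := hae.exists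
  refine ⟨f y₀, ?_⟩
  have hμ0 : μ {y | ¬ f y = f y₀} = 0 := by
    have : ∀ᵐ y' ∂μ, f y' = f y₀ := hy₀.mono fun y' hy' => hy'.symm
    exact ae_iff.mp this
  have hset : MeasurableSet {y : Fin (n + 1) → 𝕐 | ¬ f y = f y₀} :=
    (measurableSet_eq_fun hf measurable_const).compl
  have hmap0 : Measure.map Y P {y | ¬ f y = f y₀} = 0 := hac₁ hμ0
  have hP0 : P (Y ⁻¹' {y | ¬ f y = f y₀}) = 0 := by
    rw [← Measure.map_apply hY hset]; exact hmap0
  rw [Filter.EventuallyEq, ae_iff]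
  exact hP0
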